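/- Let a, c ∈ ℂ with a ≠ 0, |a| < 1, and c ≠ 0, and suppose ψ(z) = a·z/(1 − c·z) is a selfmap of 𝔻 (1 − c·z ≠ 0 and |ψ(z)| < 1 for all z ∈ 𝔻). Then the linear-fractional map σ₁∘ψ⁻¹, where σ₁(z) = conj(a)·z + conj(c) is the adjoint of ψ and ψ⁻¹(z) = z/(a + c·z), given explicitly by Ψ(z) = ((conj(a) + conj(c)·c)·z + a·conj(c))/(c·z + a), fails to map 𝔻 into 𝔻: there exists z₀ ∈ 𝔻 such that either c·z₀ + a = 0 or |Ψ(z₀)| ≥ 1. -/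

import Mathlib

open ComplexConjugate

/-- If `ψ(z) = az/(1-cz)` with `0 < |a| < 1` and `c ≠ 0` is a selfmap of the unit
disk, then `σ₁ ∘ ψ⁻¹` (where `σ₁(z) = conj(a)z + conj(c)` is the Cowen adjoint of `ψ`
and `ψ⁻¹(z) = z/(a + cz)`), given by
`Ψ(z) = ((conj a + conj c · c)z + a·conj c)/(cz + a)`, fails to map the unit disk
into itself. -/
theorem adjoint_comp_psi_inv_not_selfmap (a c : ℂ)
    (ha0 : a ≠ 0) (ha : ‖a‖ < 1) (hc : c ≠ 0)
    (hself : ∀ z : ℂ, ‖z‖ < 1 →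
      1 - c * z ≠ 0 ∧ ‖a * z / (1 - c * z)‖ < 1) :
    ∃ z₀ : ℂ, ‖z₀‖ < 1 ∧
      (c * z₀ + a = 0 ∨
        1 ≤ ‖((conj a + conj c * c) * z₀ + a * conj c) / (c * z₀ + a)‖) := by
  set A := ‖a‖ with hA_def
  set C := ‖c‖ with hC_def
  have hA0 : 0 < A := norm_pos_iff.mpr ha0
  have hC0 : 0 < C := norm_pos_iff.mpr hc
  rcases lt_or_ge A C with hlt | hge
  · refine ⟨-a / c, ?_, Or.inl ?_⟩
    · rw [norm_div, norm_neg]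
      exact (div_lt_one hC0).mpr hlt
    · field_simp
      ring
  · -- C ≤ A case
    set L : ℝ := A * (1 + C) / (A + C + C ^ 2) with hL_def
    have hden0 : 0 < A + C + C ^ 2 := by positivity
    have hL1 : L < 1 := by
      rw [hL_def, div_lt_one hden0]
      nlinarith
    have hL0 : 0 < L := by positivity
    set t : ℝ := (L + 1) / 2 with ht_def
    have ht0 : 0 < t := by positivity
    have ht1 : t < 1 := by rw [ht_def]; linarith
    have htL : L < t := by rw [ht_def]; linarith
    have htC : t * C < A := by nlinarith
    have hAne : (A : ℂ) ≠ 0 := by exact_mod_cast hA0.ne'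
    have hCne : (C : ℂ) ≠ 0 := by exact_mod_cast hC0.ne'
    set z₀ : ℂ := -((t : ℂ) * (a * (C : ℂ)) / (c * (A : ℂ))) with hz₀_def
    have habs_z₀ : ‖z₀‖ = t := by
      simp only [hz₀_def, norm_neg, norm_div, norm_mul, Complex.norm_real, Real.norm_eq_abs,
        abs_of_pos ht0, abs_of_pos hA0, abs_of_pos hC0, ← hA_def, ← hC_def]
      rw [mul_comm C A, mul_div_assoc, div_self (by positivity : A * C ≠ 0), mul_one]
    refine ⟨z₀, by rw [habs_z₀]; exact ht1, Or.inr ?_⟩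
    have hden_eq : c * z₀ + a = a * (((A - t * C : ℝ)) : ℂ) / (A : ℂ) := by
      rw [hz₀_def]; push_cast; field_simp; ring
    have habs_den : ‖c * z₀ + a‖ = A - t * C := by
      rw [hden_eq, norm_div, norm_mul, Complex.norm_real, Real.norm_eq_abs, Complex.norm_real, Real.norm_eq_abs]
      rw [abs_of_pos (by linarith : (0:ℝ) < A - t * C), abs_of_pos hA0, ← hA_def]
      field_simp
    have hcc : conj c = (((C ^ 2 : ℝ)) : ℂ) / c := by
      rw [eq_div_iff hc, mul_comm, Complex.mul_conj, Complex.normSq_eq_norm_sq]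
    have hnum_eq : (conj a + conj c * c) * z₀ + a * conj c
        = (a * (C : ℂ) / (c * (A : ℂ))) *
          ((((C * A - t * C ^ 2 : ℝ)) : ℂ) - (t : ℂ) * conj a) := by
      rw [hcc, hz₀_def]; push_cast; field_simp; ring
    have habs_num : ‖(conj a + conj c * c) * z₀ + a * conj c‖
        = ‖(((C * A - t * C ^ 2 : ℝ)) : ℂ) - (t : ℂ) * conj a‖ := by
      rw [hnum_eq, norm_mul, norm_div, norm_mul, norm_mul, Complex.norm_real, Real.norm_eq_abs,
        Complex.norm_real, Real.norm_eq_abs]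
      rw [abs_of_pos hA0, abs_of_pos hC0, ← hA_def, ← hC_def]
      rw [show A * C / (C * A) = 1 by rw [mul_comm C A]; exact div_self (by positivity)]
      ring
    have hw : C * A - t * C ^ 2 ≥ 0 := by nlinarith
    have habs_w : ‖(((C * A - t * C ^ 2 : ℝ)) : ℂ)‖ = C * A - t * C ^ 2 := by
      rw [Complex.norm_real, Real.norm_eq_abs, abs_of_nonneg hw]
    have habs_ta : ‖(t : ℂ) * conj a‖ = t * A := by
      rw [norm_mul, Complex.norm_real, Real.norm_eq_abs, Complex.norm_conj, abs_of_pos ht0]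
    have hlower : t * A - (C * A - t * C ^ 2)
        ≤ ‖(((C * A - t * C ^ 2 : ℝ)) : ℂ) - (t : ℂ) * conj a‖ := by
      have h := norm_sub_le ((t : ℂ) * conj a) ((((C * A - t * C ^ 2 : ℝ)) : ℂ))
      have h2 : ‖(t : ℂ) * conj a‖
          ≤ ‖(t : ℂ) * conj a - (((C * A - t * C ^ 2 : ℝ)) : ℂ)‖
            + ‖(((C * A - t * C ^ 2 : ℝ)) : ℂ)‖ := by
        have := norm_add_le ((t : ℂ) * conj a - (((C * A - t * C ^ 2 : ℝ)) : ℂ))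
          ((((C * A - t * C ^ 2 : ℝ)) : ℂ))
        simpa using this
      rw [habs_ta, habs_w] at h2
      rw [show (((C * A - t * C ^ 2 : ℝ)) : ℂ) - (t : ℂ) * conj a
        = -((t : ℂ) * conj a - (((C * A - t * C ^ 2 : ℝ)) : ℂ)) by ring, norm_neg]
      linarith
    have hkey : A - t * C ≤ ‖(conj a + conj c * c) * z₀ + a * conj c‖ := by
      rw [habs_num]
      have : A - t * C ≤ t * A - (C * A - t * C ^ 2) := by
        have h3 : A * (1 + C) < t * (A + C + C ^ 2) := by
          rw [hL_def, div_lt_iff₀ hden0] at htL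
          linarith [htL]
        nlinarith
      linarith
    rw [norm_div, habs_den, le_div_iff₀ (by linarith), one_mul]
    exact hkey
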